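/- Let G be a bridgeless cubic graph having a 2-factor each of whose cycles is a chordless 5-cycle, and let M be the perfect matching complementary to this 2-factor. Suppose there is a partition of the cycles of this 2-factor into two classes such that every edge of M joins vertices lying on cycles in different classes (equivalently, the multigraph G* obtained by contracting each 5-cycle of the 2-factor to a single vertex is bipartite). Then G admits a Fulkerson covering. -/

import Mathlib

open SimpleGraph

variable {V : Type*}

/-- Two edges (as unordered pairs) are disjoint: they share no vertex. -/
def Sym2Disjoint {V : Type*} (e f : Sym2 V) : Prop := ∀ v : V, v ∈ e → v ∉ f

/-- A matching of `G`, given as a set of edges of `G` which are pairwise disjoint. -/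
def IsMatchingSet (G : SimpleGraph V) (M : Set (Sym2 V)) : Prop :=
  M ⊆ G.edgeSet ∧ M.Pairwise Sym2Disjoint

/-- A perfect matching of `G`: a matching covering every vertex. -/
def IsPerfectMatchingSet (G : SimpleGraph V) (M : Set (Sym2 V)) : Prop :=
  IsMatchingSet G M ∧ ∀ v : V, ∃ e ∈ M, v ∈ e

/-- A cubic (3-regular) graph. -/
def IsCubic (G : SimpleGraph V) : Prop := ∀ v : V, (G.neighborSet v).ncard = 3

/-- A bridgeless graph. -/
def Bridgeless (G : SimpleGraph V) : Prop := ∀ e : Sym2 V, ¬ G.IsBridge e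

/-- A Fulkerson covering: six perfect matchings such that every edge of `G`
lies in exactly two of them (counted with multiplicity in the list). -/
def IsFulkersonCovering (G : SimpleGraph V) (M : Fin 6 → Set (Sym2 V)) : Prop :=
  (∀ i, IsPerfectMatchingSet G (M i)) ∧
  ∀ e ∈ G.edgeSet, ({i : Fin 6 | e ∈ M i} : Set (Fin 6)).ncard = 2

/-- An FR-triple: three perfect matchings with empty intersection. -/
def IsFRTriple (G : SimpleGraph V) (M1 M2 M3 : Set (Sym2 V)) : Prop :=
  IsPerfectMatchingSet G M1 ∧ IsPerfectMatchingSet G M2 ∧ IsPerfectMatchingSet G M3 ∧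
  M1 ∩ M2 ∩ M3 = ∅

/-- `tSet G M1 M2 M3 k` is the set `T_k` of edges of `G` lying in exactly `k`
of the three matchings (counted with multiplicity). -/
def tSet (G : SimpleGraph V) (M1 M2 M3 : Set (Sym2 V)) (k : ℕ) : Set (Sym2 V) :=
  {e ∈ G.edgeSet | ({i : Fin 3 | e ∈ ![M1, M2, M3] i} : Set (Fin 3)).ncard = k}

/-- Two FR-triples are compatible when `T_0 = T'_2` and `T_2 = T'_0`. -/
def CompatibleFR (G : SimpleGraph V) (M1 M2 M3 N1 N2 N3 : Set (Sym2 V)) : Prop :=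
  tSet G M1 M2 M3 0 = tSet G N1 N2 N3 2 ∧ tSet G M1 M2 M3 2 = tSet G N1 N2 N3 0

/-- `P` describes a 2-factor of `G` whose cycles are chordless 5-cycles:
a partition of the vertex set into 5-element parts each inducing a connected
2-regular (hence chordless cycle) subgraph of `G`. -/
def IsChordlessC5TwoFactor (G : SimpleGraph V) (P : Set (Set V)) : Prop :=
  P.PairwiseDisjoint id ∧ ⋃₀ P = Set.univ ∧
  ∀ S ∈ P, S.ncard = 5 ∧ (∀ v ∈ S, ({u | u ∈ S ∧ G.Adj v u}).ncard = 2) ∧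
    (G.induce S).Connected

/-- The perfect matching complementary to the 2-factor described by `P`:
the edges of `G` not lying inside a part of `P`. -/
def complementaryMatching (G : SimpleGraph V) (P : Set (Set V)) : Set (Sym2 V) :=
  {e | e ∈ G.edgeSet ∧ ¬ ∃ S ∈ P, ∀ v ∈ e, v ∈ S}


section FulkersonAux

open Finset

universe u v

lemma fiber_count {E : Type u} {A : Type v} [Fintype E] [DecidableEq E] [Fintype A]
    [DecidableEq A] (L : E → A) {r : ℕ}
    (hL : ∀ a, (univ.filter (fun e => L e = a)).card = r) (s : Finset A) :
    (univ.filter (fun e => L e ∈ s)).card = r * s.card := by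
  rw [Finset.card_eq_sum_card_fiberwise (f := L) (s := univ.filter (fun e => L e ∈ s)) (t := s)
    (fun e he => (mem_filter.mp he).2)]
  rw [Finset.sum_congr rfl (g := fun _ => r) (fun b hb => ?_)]
  · rw [Finset.sum_const, smul_eq_mul, mul_comm]
  · rw [Finset.filter_filter]
    rw [← hL b]
    congr 1
    apply Finset.filter_congr
    intro e _
    simp only [and_iff_right_iff_imp]
    intro h; rw [h]; exact hb


lemma card_filter_attach {E : Type u} [DecidableEq E] (T : Finset E) (p : E → Prop)
    [DecidablePred p] :
    (T.attach.filter (fun x => p x.1)).card = (T.filter p).card := by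
  apply Finset.card_bij (fun x _ => x.1)
  · intro x hx
    rw [Finset.mem_filter] at hx ⊢
    exact ⟨x.2, hx.2⟩
  · intro x _ y _ h
    exact Subtype.ext h
  · intro e he
    rw [Finset.mem_filter] at he
    exact ⟨⟨e, he.1⟩, Finset.mem_filter.mpr ⟨Finset.mem_attach _ _, he.2⟩, rfl⟩

lemma konig_aux (r : ℕ) {A B : Type v} [Fintype A] [DecidableEq A] [Fintype B] [DecidableEq B] :
    ∀ {E : Type u} [Fintype E] [DecidableEq E] (L : E → A) (R : E → B),
    (∀ a, (univ.filter (fun e => L e = a)).card = r) →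
    (∀ b, (univ.filter (fun e => R e = b)).card = r) →
    ∃ c : E → Fin r,
      (∀ e e', L e = L e' → c e = c e' → e = e') ∧
      (∀ e e', R e = R e' → c e = c e' → e = e') := by
  induction r with
  | zero =>
    intro E _ _ L R hL hR
    have hE : IsEmpty E := by
      constructor; intro e
      have h := hL (L e)
      rw [Finset.card_eq_zero] at h
      exact absurd h (Finset.ne_empty_of_mem (by simp : e ∈ _))
    exact ⟨fun e => hE.elim e, fun e => hE.elim e, fun e => hE.elim e⟩
  | succ r ih =>
    intro E _ _ L R hL hR
    -- Hall's condition
    have hall : ∀ s : Finset A, s.card ≤ (s.biUnion (fun a => (univ.filter (fun e => L e = a)).image R)).card := by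
      intro s
      have h1 : (univ.filter (fun e => L e ∈ s)).card = (r+1) * s.card := fiber_count L hL s
      set u := s.biUnion (fun a => (univ.filter (fun e => L e = a)).image R) with hu
      have hsub : univ.filter (fun e => L e ∈ s) ⊆ univ.filter (fun e => R e ∈ u) := by
        intro e he
        rw [mem_filter] at he ⊢
        refine ⟨he.1, ?_⟩
        rw [hu, Finset.mem_biUnion]
        exact ⟨L e, he.2, Finset.mem_image.mpr ⟨e, by simp, rfl⟩⟩
      have h2 : (univ.filter (fun e => R e ∈ u)).card = (r+1) * u.card := fiber_count R hR u
      have := Finset.card_le_card hsub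
      rw [h1, h2] at this
      exact Nat.le_of_mul_le_mul_left this (Nat.succ_pos r)
    obtain ⟨f, hfinj, hf⟩ := (Finset.all_card_le_biUnion_card_iff_exists_injective _).mp hall
    -- cardinalities agree, so f is bijective
    have hcard : Fintype.card A = Fintype.card B := by
      have h1 : (univ.filter (fun e : E => L e ∈ (univ : Finset A))).card = (r+1) * Fintype.card A := by
        rw [fiber_count L hL univ]; rfl
      have h2 : (univ.filter (fun e : E => R e ∈ (univ : Finset B))).card = (r+1) * Fintype.card B := by
        rw [fiber_count R hR univ]; rfl
      simp only [Finset.mem_univ, Finset.filter_true] at h1 h2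
      have := h1.symm.trans h2
      exact Nat.eq_of_mul_eq_mul_left (Nat.succ_pos r) this
    have hfbij : Function.Bijective f :=
      (Fintype.bijective_iff_injective_and_card f).mpr ⟨hfinj, hcard⟩
    -- choose one edge per a
    have hsel : ∀ a, ∃ e : E, L e = a ∧ R e = f a := by
      intro a
      have := hf a
      rw [Finset.mem_image] at this
      obtain ⟨e, he, hre⟩ := this
      exact ⟨e, (mem_filter.mp he).2, hre⟩
    choose sel hselL hselR using hsel
    have hselinj : Function.Injective sel := by
      intro a a' h
      rw [← hselL a, ← hselL a', h]
    -- the remaining edges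
    set T : Finset E := univ \ univ.image sel with hT
    have hTL : ∀ a, (T.filter (fun e => L e = a)).card = r := by
      intro a
      have hsplit : T.filter (fun e => L e = a)
          = univ.filter (fun e => L e = a) \ {sel a} := by
        ext e
        simp only [hT, Finset.mem_filter, Finset.mem_sdiff, Finset.mem_singleton,
          Finset.mem_univ, true_and]
        constructor
        · rintro ⟨h1, h2⟩
          refine ⟨h2, fun h => h1 ?_⟩
          rw [h]
          exact Finset.mem_image.mpr ⟨a, Finset.mem_univ a, rfl⟩
        · rintro ⟨h2, h1⟩
          refine ⟨fun hmem => ?_, h2⟩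
          obtain ⟨a', -, rfl⟩ := Finset.mem_image.mp hmem
          have : a' = a := by rw [← hselL a', h2]
          subst this
          exact h1 rfl
      rw [hsplit, Finset.card_sdiff_of_subset]
      · rw [hL a, Finset.card_singleton]
        omega
      · intro x hx
        rw [Finset.mem_singleton] at hx
        subst hx
        simp [hselL a]
    have hTR : ∀ b, (T.filter (fun e => R e = b)).card = r := by
      intro b
      obtain ⟨a0, rfl⟩ := hfbij.2 b
      have hsplit : T.filter (fun e => R e = f a0)
          = univ.filter (fun e => R e = f a0) \ {sel a0} := by
        ext e
        simp only [hT, Finset.mem_filter, Finset.mem_sdiff, Finset.mem_singleton,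
          Finset.mem_univ, true_and]
        constructor
        · rintro ⟨h1, h2⟩
          refine ⟨h2, fun h => h1 ?_⟩
          rw [h]
          exact Finset.mem_image.mpr ⟨a0, Finset.mem_univ a0, rfl⟩
        · rintro ⟨h2, h1⟩
          refine ⟨fun hmem => ?_, h2⟩
          obtain ⟨a', -, rfl⟩ := Finset.mem_image.mp hmem
          have : a' = a0 := hfinj (by rw [← hselR a', h2])
          subst this
          exact h1 rfl
      rw [hsplit, Finset.card_sdiff_of_subset]
      · rw [hR (f a0), Finset.card_singleton]
        omega
      · intro x hx
        rw [Finset.mem_singleton] at hx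
        subst hx
        simp [hselR a0]
    -- apply IH to the subtype
    have hTL' : ∀ a, ((univ : Finset {e : E // e ∈ T}).filter (fun x => L x.1 = a)).card = r := by
      intro a
      rw [Finset.univ_eq_attach]
      exact (card_filter_attach T (fun e => L e = a)).trans (hTL a)
    have hTR' : ∀ b, ((univ : Finset {e : E // e ∈ T}).filter (fun x => R x.1 = b)).card = r := by
      intro b
      rw [Finset.univ_eq_attach]
      exact (card_filter_attach T (fun e => R e = b)).trans (hTR b)
    obtain ⟨c', hc'L, hc'R⟩ := ih (fun x : {e : E // e ∈ T} => L x.1) (fun x => R x.1) hTL' hTR'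
    classical
    refine ⟨fun e => if h : e ∈ T then (c' ⟨e, h⟩).castSucc else Fin.last r, ?_, ?_⟩
    · intro e e' hLe hce
      by_cases h : e ∈ T <;> by_cases h' : e' ∈ T
      · simp only [dif_pos h, dif_pos h'] at hce
        have := hc'L ⟨e, h⟩ ⟨e', h'⟩ hLe (Fin.castSucc_injective r hce)
        exact congrArg Subtype.val this
      · simp only [dif_pos h, dif_neg h'] at hce
        exact absurd hce (Fin.castSucc_lt_last _).ne
      · simp only [dif_neg h, dif_pos h'] at hce
        exact absurd hce.symm (Fin.castSucc_lt_last _).ne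
      · -- both are in the image of sel
        simp only [hT, Finset.mem_sdiff, Finset.mem_univ, true_and, not_not] at h h'
        obtain ⟨a, -, rfl⟩ := Finset.mem_image.mp h
        obtain ⟨a', -, rfl⟩ := Finset.mem_image.mp h'
        have : a = a' := by rw [← hselL a, ← hselL a', hLe]
        rw [this]
    · intro e e' hRe hce
      by_cases h : e ∈ T <;> by_cases h' : e' ∈ T
      · simp only [dif_pos h, dif_pos h'] at hce
        have := hc'R ⟨e, h⟩ ⟨e', h'⟩ hRe (Fin.castSucc_injective r hce)
        exact congrArg Subtype.val this
      · simp only [dif_pos h, dif_neg h'] at hce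
        exact absurd hce (Fin.castSucc_lt_last _).ne
      · simp only [dif_neg h, dif_pos h'] at hce
        exact absurd hce.symm (Fin.castSucc_lt_last _).ne
      · simp only [hT, Finset.mem_sdiff, Finset.mem_univ, true_and, not_not] at h h'
        obtain ⟨a, -, rfl⟩ := Finset.mem_image.mp h
        obtain ⟨a', -, rfl⟩ := Finset.mem_image.mp h'
        have : a = a' := hfinj (by rw [← hselR a, ← hselR a', hRe])
        rw [this]


def cycFun {V : Type*} (v0 v1 v2 v3 v4 : V) : ZMod 5 → V := fun i =>
  if i = 0 then v0 else if i = 1 then v1 else if i = 2 then v2 else if i = 3 then v3 else v4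

lemma cycle_structure {V : Type*} [Fintype V] (G : SimpleGraph V) (S : Set V)
    (h5 : S.ncard = 5)
    (hdeg : ∀ v ∈ S, ({u | u ∈ S ∧ G.Adj v u}).ncard = 2) :
    ∃ f : ZMod 5 → V, Function.Injective f ∧ Set.range f = S ∧
      ∀ i : ZMod 5, G.Adj (f i) (f (i + 1)) := by
  classical
  set N : V → Set V := fun v => {u | u ∈ S ∧ G.Adj v u} with hNdef
  have hNsub : ∀ v, N v ⊆ S := fun v u hu => hu.1
  have hNsymm : ∀ v ∈ S, ∀ u, u ∈ N v → v ∈ N u := fun v hv u hu => ⟨hv, hu.2.symm⟩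
  have hNeq : ∀ v ∈ S, ∀ x y, x ∈ N v → y ∈ N v → x ≠ y → N v = {x, y} := by
    intro v hv x y hx hy hxy
    have hsub : ({x, y} : Set V) ⊆ N v := by
      intro z hz
      rcases hz with rfl | rfl
      · exact hx
      · exact hy
    refine (Set.eq_of_subset_of_ncard_le hsub ?_ (Set.toFinite _)).symm
    rw [hdeg v hv, Set.ncard_pair hxy]
  have step : ∀ v ∈ S, ∀ u, u ∈ N v → ∃ w, w ∈ N v ∧ w ≠ u ∧ N v = {u, w} := by
    intro v hv u hu
    obtain ⟨a, b, hab, hNv⟩ := Set.ncard_eq_two.mp (hdeg v hv)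
    rw [show {u | u ∈ S ∧ G.Adj v u} = N v from rfl] at hNv
    rw [hNv] at hu ⊢
    rcases hu with rfl | rfl
    · exact ⟨b, Or.inr rfl, hab.symm, rfl⟩
    · exact ⟨a, Or.inl rfl, hab, Set.pair_comm a u⟩
  obtain ⟨v0, hv0⟩ : S.Nonempty := Set.nonempty_of_ncard_ne_zero (by omega)
  obtain ⟨v1, hv1⟩ : (N v0).Nonempty :=
    Set.nonempty_of_ncard_ne_zero (by rw [hdeg v0 hv0]; omega)
  have hv1S : v1 ∈ S := hNsub v0 hv1
  obtain ⟨v2, hv2, hv2ne0, hN1⟩ := step v1 hv1S v0 (hNsymm v0 hv0 v1 hv1)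
  have hv2S : v2 ∈ S := hNsub v1 hv2
  obtain ⟨v3, hv3, hv3ne1, hN2⟩ := step v2 hv2S v1 (hNsymm v1 hv1S v2 hv2)
  have hv3S : v3 ∈ S := hNsub v2 hv3
  have adj01 : G.Adj v0 v1 := hv1.2
  have adj12 : G.Adj v1 v2 := hv2.2
  have adj23 : G.Adj v2 v3 := hv3.2
  have h01 : v0 ≠ v1 := adj01.ne
  have h12 : v1 ≠ v2 := adj12.ne
  have h23 : v2 ≠ v3 := adj23.ne
  have h02 : v0 ≠ v2 := hv2ne0.symm
  have h13 : v1 ≠ v3 := hv3ne1.symm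
  have h03 : v0 ≠ v3 := by
    intro hc
    subst hc
    have hN0 : N v0 = {v1, v2} := hNeq v0 hv0 v1 v2 hv1 (hNsymm v2 hv2S v0 hv3) h12
    have hsub3 : ({v0, v1, v2} : Set V) ⊆ S := by
      intro x hx
      rcases hx with rfl | rfl | rfl
      exacts [hv0, hv1S, hv2S]
    have hc3 : ({v0, v1, v2} : Set V).ncard = 3 := by
      rw [Set.ncard_insert_of_notMem (by simp [h01, h02]), Set.ncard_pair h12]
    have hd : (S \ {v0, v1, v2}).ncard = 2 := by
      rw [Set.ncard_diff hsub3, h5, hc3]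
    obtain ⟨w, hw⟩ : (S \ {v0, v1, v2}).Nonempty :=
      Set.nonempty_of_ncard_ne_zero (by omega)
    have hwS : w ∈ S := hw.1
    have hsubw : N w ⊆ (S \ {v0, v1, v2}) \ {w} := by
      intro x hx
      have hwNx : w ∈ N x := ⟨hwS, hx.2.symm⟩
      refine ⟨⟨hx.1, ?_⟩, ?_⟩
      · intro hmem
        rcases hmem with rfl | rfl | rfl
        · rw [hN0] at hwNx
          rcases hwNx with rfl | rfl
          · exact hw.2 (Or.inr (Or.inl rfl))
          · exact hw.2 (Or.inr (Or.inr rfl))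
        · rw [hN1] at hwNx
          rcases hwNx with rfl | rfl
          · exact hw.2 (Or.inl rfl)
          · exact hw.2 (Or.inr (Or.inr rfl))
        · rw [hN2] at hwNx
          rcases hwNx with rfl | rfl
          · exact hw.2 (Or.inr (Or.inl rfl))
          · exact hw.2 (Or.inl rfl)
      · simp only [Set.mem_singleton_iff]
        rintro rfl
        exact G.loopless.irrefl x hx.2
    have hle := Set.ncard_le_ncard hsubw (Set.toFinite _)
    rw [hdeg w hwS] at hle
    have hone : (((S \ {v0, v1, v2}) \ {w}) : Set V).ncard = 1 := by
      rw [Set.ncard_diff (Set.singleton_subset_iff.mpr hw), hd, Set.ncard_singleton]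
    omega
  obtain ⟨v4, hv4, hv4ne2, hN3⟩ := step v3 hv3S v2 (hNsymm v2 hv2S v3 hv3)
  have hv4S : v4 ∈ S := hNsub v3 hv4
  have adj34 : G.Adj v3 v4 := hv4.2
  have h34 : v3 ≠ v4 := adj34.ne
  have h24 : v2 ≠ v4 := hv4ne2.symm
  have h14 : v1 ≠ v4 := by
    intro hc
    subst hc
    have hmem : v3 ∈ N v1 := ⟨hv3S, adj34.symm⟩
    rw [hN1] at hmem
    rcases hmem with h | h
    · exact h03 h.symm
    · exact h23 h.symm
  have h04 : v0 ≠ v4 := by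
    intro hc
    subst hc
    have hN0 : N v0 = {v1, v3} := hNeq v0 hv0 v1 v3 hv1 ⟨hv3S, adj34.symm⟩ h13
    have hsub4 : ({v0, v1, v2, v3} : Set V) ⊆ S := by
      intro x hx
      rcases hx with rfl | rfl | rfl | rfl
      exacts [hv0, hv1S, hv2S, hv3S]
    have hc4 : ({v0, v1, v2, v3} : Set V).ncard = 4 := by
      rw [Set.ncard_insert_of_notMem (by simp [h01, h02, h03]),
        Set.ncard_insert_of_notMem (by simp [h12, h13]), Set.ncard_pair h23]
    have hd : (S \ {v0, v1, v2, v3}).ncard = 1 := by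
      rw [Set.ncard_diff hsub4, h5, hc4]
    obtain ⟨w, hw⟩ : (S \ {v0, v1, v2, v3}).Nonempty :=
      Set.nonempty_of_ncard_ne_zero (by omega)
    have hwS : w ∈ S := hw.1
    have hwuniq : S \ {v0, v1, v2, v3} = {w} := by
      obtain ⟨a, ha⟩ := Set.ncard_eq_one.mp hd
      rw [ha] at hw ⊢
      rw [hw]
    have hNw : N w = ∅ := by
      ext x
      simp only [Set.mem_empty_iff_false, iff_false]
      intro hx
      have hwNx : w ∈ N x := ⟨hwS, hx.2.symm⟩
      by_cases hx4 : x ∈ ({v0, v1, v2, v3} : Set V)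
      · rcases hx4 with rfl | rfl | rfl | rfl
        · rw [hN0] at hwNx
          rcases hwNx with rfl | rfl
          · exact hw.2 (Or.inr (Or.inl rfl))
          · exact hw.2 (Or.inr (Or.inr (Or.inr rfl)))
        · rw [hN1] at hwNx
          rcases hwNx with rfl | rfl
          · exact hw.2 (Or.inl rfl)
          · exact hw.2 (Or.inr (Or.inr (Or.inl rfl)))
        · rw [hN2] at hwNx
          rcases hwNx with rfl | rfl
          · exact hw.2 (Or.inr (Or.inl rfl))
          · exact hw.2 (Or.inr (Or.inr (Or.inr rfl)))
        · rw [hN3] at hwNx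
          rcases hwNx with rfl | rfl
          · exact hw.2 (Or.inr (Or.inr (Or.inl rfl)))
          · exact hw.2 (Or.inl rfl)
      · have hxw : x ∈ S \ {v0, v1, v2, v3} := ⟨hx.1, hx4⟩
        rw [hwuniq] at hxw
        rw [Set.mem_singleton_iff] at hxw
        subst hxw
        exact G.loopless.irrefl x hx.2
    have := hdeg w hwS
    rw [show {u | u ∈ S ∧ G.Adj w u} = N w from rfl, hNw, Set.ncard_empty] at this
    omega
  have hsub5 : ({v0, v1, v2, v3, v4} : Set V) ⊆ S := by
    intro x hx
    rcases hx with rfl | rfl | rfl | rfl | rfl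
    exacts [hv0, hv1S, hv2S, hv3S, hv4S]
  have hc5 : ({v0, v1, v2, v3, v4} : Set V).ncard = 5 := by
    rw [Set.ncard_insert_of_notMem (by simp [h01, h02, h03, h04]),
      Set.ncard_insert_of_notMem (by simp [h12, h13, h14]),
      Set.ncard_insert_of_notMem (by simp [h23, h24]), Set.ncard_pair h34]
  have hSeq : ({v0, v1, v2, v3, v4} : Set V) = S :=
    Set.eq_of_subset_of_ncard_le hsub5 (by rw [h5, hc5]) (Set.toFinite _)
  obtain ⟨x, hx, hxne3, hN4⟩ := step v4 hv4S v3 (hNsymm v3 hv3S v4 hv4)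
  have hxS : x ∈ S := hNsub v4 hx
  have adjx : G.Adj v4 x := hx.2
  have hx0 : x = v0 := by
    rw [← hSeq] at hxS
    rcases hxS with h | h | h | h | h
    · exact h
    · exfalso
      have hmem : v4 ∈ N v1 := ⟨hv4S, (h ▸ adjx).symm⟩
      rw [hN1] at hmem
      rcases hmem with h' | h'
      · exact h04 h'.symm
      · exact h24 h'.symm
    · exfalso
      have hmem : v4 ∈ N v2 := ⟨hv4S, (h ▸ adjx).symm⟩
      rw [hN2] at hmem
      rcases hmem with h' | h'
      · exact h14 h'.symm
      · exact h34 h'.symm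
    · exact absurd h hxne3
    · exact absurd (h ▸ adjx) (G.loopless.irrefl v4)
  have adj40 : G.Adj v4 v0 := hx0 ▸ adjx
  refine ⟨cycFun v0 v1 v2 v3 v4, ?_, ?_, ?_⟩
  · intro i j h
    fin_cases i <;> fin_cases j <;>
      first
      | rfl
      | exact absurd h h01 | exact absurd h.symm h01
      | exact absurd h h02 | exact absurd h.symm h02
      | exact absurd h h03 | exact absurd h.symm h03
      | exact absurd h h04 | exact absurd h.symm h04
      | exact absurd h h12 | exact absurd h.symm h12
      | exact absurd h h13 | exact absurd h.symm h13
      | exact absurd h h14 | exact absurd h.symm h14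
      | exact absurd h h23 | exact absurd h.symm h23
      | exact absurd h h24 | exact absurd h.symm h24
      | exact absurd h h34 | exact absurd h.symm h34
  · rw [← hSeq]
    ext y
    simp only [Set.mem_range, Set.mem_insert_iff, Set.mem_singleton_iff]
    constructor
    · rintro ⟨i, rfl⟩
      fin_cases i
      · exact Or.inl rfl
      · exact Or.inr (Or.inl rfl)
      · exact Or.inr (Or.inr (Or.inl rfl))
      · exact Or.inr (Or.inr (Or.inr (Or.inl rfl)))
      · exact Or.inr (Or.inr (Or.inr (Or.inr rfl)))
    · rintro (rfl | rfl | rfl | rfl | rfl)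
      exacts [⟨0, rfl⟩, ⟨1, rfl⟩, ⟨2, rfl⟩, ⟨3, rfl⟩, ⟨4, rfl⟩]
  · intro i
    fin_cases i
    · exact adj01
    · exact adj12
    · exact adj23
    · exact adj34
    · exact adj40

end FulkersonAux

/-- Let `G` be a bridgeless cubic graph with a 2-factor all of whose
cycles are chordless 5-cycles, with complementary perfect matching `M`. If the cycles of
the 2-factor can be partitioned into two classes so that every edge of `M` joins
vertices lying on cycles in different classes (i.e. the contracted multigraph `G*` is
bipartite), then `G` admits a Fulkerson covering. -/
theorem stmt_15 {V : Type*} [Fintype V] (G : SimpleGraph V)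
    (hcubic : IsCubic G) (hbridgeless : Bridgeless G)
    (P : Set (Set V)) (hP : IsChordlessC5TwoFactor G P)
    (P1 P2 : Set (Set V)) (hunion : P1 ∪ P2 = P) (hdisj : P1 ∩ P2 = ∅)
    (hbip : ∀ u v : V, s(u, v) ∈ complementaryMatching G P →
      ∀ S ∈ P, ∀ T ∈ P, u ∈ S → v ∈ T →
        ((S ∈ P1 ∧ T ∈ P2) ∨ (S ∈ P2 ∧ T ∈ P1))) :
    ∃ F : Fin 6 → Set (Sym2 V), IsFulkersonCovering G F := by
  classical
  rcases isEmpty_or_nonempty V with hemp | hne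
  · refine ⟨fun _ => ∅, fun i => ⟨⟨fun e he => absurd he (Set.notMem_empty e),
      Set.pairwise_empty _⟩, fun v => hemp.elim v⟩, ?_⟩
    intro e he
    induction e using Sym2.ind with
    | _ u w => exact hemp.elim u
  obtain ⟨hPdisj, hPcover, hPparts⟩ := hP
  have hpex : ∀ v : V, ∃ S, S ∈ P ∧ v ∈ S := by
    intro v
    have hv : v ∈ ⋃₀ P := by rw [hPcover]; trivial
    exact hv
  choose p hpP hpmem using hpex
  have part_eq : ∀ {v : V} {S : Set V}, S ∈ P → v ∈ S → p v = S := by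
    intro v S hS hv
    by_contra hne
    exact Set.disjoint_left.mp (hPdisj (hpP v) hS hne) (hpmem v) hv
  have hdeg2 : ∀ v : V, ({u | u ∈ p v ∧ G.Adj v u}).ncard = 2 :=
    fun v => (hPparts _ (hpP v)).2.1 v (hpmem v)
  have h5 : ∀ S ∈ P, S.ncard = 5 := fun S hS => (hPparts S hS).1
  -- every vertex has a unique neighbour outside its own cycle
  have hmex : ∀ v : V, ∃ u, G.Adj v u ∧ u ∉ p v ∧ ∀ w, G.Adj v w → w ∉ p v → w = u := by
    intro v
    have hsub : {u | u ∈ p v ∧ G.Adj v u} ⊆ G.neighborSet v := fun u hu => hu.2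
    have hdiff : ((G.neighborSet v) \ {u | u ∈ p v ∧ G.Adj v u}).ncard = 1 := by
      rw [Set.ncard_diff hsub (Set.toFinite _), hcubic v, hdeg2 v]
    obtain ⟨u, hu⟩ := Set.ncard_eq_one.mp hdiff
    have humem : u ∈ (G.neighborSet v) \ {u | u ∈ p v ∧ G.Adj v u} := by
      rw [hu]; rfl
    refine ⟨u, humem.1, fun hmem => humem.2 ⟨hmem, humem.1⟩, ?_⟩
    intro w hw hwp
    have hwmem : w ∈ (G.neighborSet v) \ {u | u ∈ p v ∧ G.Adj v u} :=
      ⟨hw, fun hmem => hwp hmem.1⟩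
    rw [hu] at hwmem
    exact hwmem
  choose m hmadj hmout hmuniq using hmex
  have hmm : ∀ v, m (m v) = v := by
    intro v
    have h1 : G.Adj (m v) v := (hmadj v).symm
    have h2 : v ∉ p (m v) := by
      intro hv
      have heq : p v = p (m v) := part_eq (hpP (m v)) hv
      apply hmout v
      rw [heq]
      exact hpmem (m v)
    exact (hmuniq (m v) v h1 h2).symm
  have hmne : ∀ v, m v ≠ v := by
    intro v h
    have h2 := hmadj v
    rw [h] at h2
    exact G.loopless.irrefl v h2
  have hm_cm : ∀ v, s(v, m v) ∈ complementaryMatching G P := by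
    intro v
    refine ⟨(G.mem_edgeSet).mpr (hmadj v), ?_⟩
    rintro ⟨S, hS, hall⟩
    have hvS : v ∈ S := hall v (Sym2.mem_mk_left v (m v))
    have heq : p v = S := part_eq hS hvS
    apply hmout v
    rw [heq]
    exact hall (m v) (Sym2.mem_mk_right v (m v))
  have cm_eq : ∀ u w : V, G.Adj u w → s(u, w) ∈ complementaryMatching G P → w = m u := by
    intro u w hadj hmem
    apply hmuniq u w hadj
    intro hwp
    apply hmem.2
    refine ⟨p u, hpP u, ?_⟩
    intro z hz
    rcases Sym2.mem_iff.mp hz with h | h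
    · rw [h]; exact hpmem u
    · rw [h]; exact hwp
  have hcm_rep : ∀ e ∈ complementaryMatching G P, ∀ x ∈ e, e = s(x, m x) := by
    intro e
    induction e using Sym2.ind with
    | _ u w =>
      intro he x hx
      have hadj : G.Adj u w := he.1
      have he' : s(w, u) ∈ complementaryMatching G P := by rwa [Sym2.eq_swap] at he
      rcases Sym2.mem_iff.mp hx with h | h
      · rw [h, ← cm_eq u w hadj he]
      · rw [h, ← cm_eq w u hadj.symm he']
        exact Sym2.eq_swap
  -- bipartite class facts
  have hP1P : P1 ⊆ P := hunion ▸ Set.subset_union_left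
  have hP2P : P2 ⊆ P := hunion ▸ Set.subset_union_right
  have hor : ∀ S ∈ P, S ∈ P1 ∨ S ∈ P2 := by
    intro S hS
    rw [← hunion] at hS
    exact hS
  have hnotboth : ∀ S, S ∈ P1 → S ∈ P2 → False := by
    intro S h1 h2
    have hmem : S ∈ P1 ∩ P2 := ⟨h1, h2⟩
    rw [hdisj] at hmem
    exact hmem
  have hcross1 : ∀ v, p v ∈ P1 → p (m v) ∈ P2 := by
    intro v h1
    rcases hbip v (m v) (hm_cm v) (p v) (hpP v) (p (m v)) (hpP (m v)) (hpmem v) (hpmem (m v)) with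
      ⟨-, h⟩ | ⟨h, -⟩
    · exact h
    · exact (hnotboth _ h1 h).elim
  have hcross2 : ∀ v, p v ∈ P2 → p (m v) ∈ P1 := by
    intro v h2
    rcases hbip v (m v) (hm_cm v) (p v) (hpP v) (p (m v)) (hpP (m v)) (hpmem v) (hpmem (m v)) with
      ⟨h, -⟩ | ⟨-, h⟩
    · exact (hnotboth _ h h2).elim
    · exact h
  have hcross1' : ∀ v, p v ∉ P1 → p (m v) ∈ P1 :=
    fun v h => hcross2 v ((hor _ (hpP v)).resolve_left h)
  -- the edge colouring, via König's theorem
  haveI : Fintype (Set V) := Fintype.ofFinite _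
  haveI : Fintype {v : V // p v ∈ P1} := Fintype.ofFinite _
  haveI : Fintype {S : Set V // S ∈ P1} := Fintype.ofFinite _
  haveI : Fintype {S : Set V // S ∈ P2} := Fintype.ofFinite _
  obtain ⟨L, hLdef⟩ : ∃ L : {v : V // p v ∈ P1} → {S : Set V // S ∈ P1},
      ∀ e, L e = ⟨p e.1, e.2⟩ := ⟨_, fun _ => rfl⟩
  obtain ⟨R, hRdef⟩ : ∃ R : {v : V // p v ∈ P1} → {S : Set V // S ∈ P2},
      ∀ e, R e = ⟨p (m e.1), hcross1 e.1 e.2⟩ := ⟨_, fun _ => rfl⟩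
  have hLfib : ∀ a : {S : Set V // S ∈ P1},
      (Finset.univ.filter (fun e => L e = a)).card = 5 := by
    rintro ⟨S, hS1⟩
    have hSP : S ∈ P := hP1P hS1
    rw [show (5 : ℕ) = S.toFinset.card from by
      rw [← Set.ncard_eq_toFinset_card']; exact (h5 S hSP).symm]
    apply Finset.card_bij (fun e _ => e.1)
    · intro e he
      rw [Finset.mem_filter, hLdef] at he
      have hpe : p e.1 = S := congrArg Subtype.val he.2
      rw [Set.mem_toFinset, ← hpe]
      exact hpmem e.1
    · intro e _ e' _ h
      exact Subtype.ext h
    · intro v hv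
      rw [Set.mem_toFinset] at hv
      have hpv : p v = S := part_eq hSP hv
      refine ⟨⟨v, by rw [hpv]; exact hS1⟩, ?_, rfl⟩
      rw [Finset.mem_filter, hLdef]
      exact ⟨Finset.mem_univ _, Subtype.ext hpv⟩
  have hRfib : ∀ b : {S : Set V // S ∈ P2},
      (Finset.univ.filter (fun e => R e = b)).card = 5 := by
    rintro ⟨T, hT2⟩
    have hTP : T ∈ P := hP2P hT2
    rw [show (5 : ℕ) = T.toFinset.card from by
      rw [← Set.ncard_eq_toFinset_card']; exact (h5 T hTP).symm]
    apply Finset.card_bij (fun e _ => m e.1)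
    · intro e he
      rw [Finset.mem_filter, hRdef] at he
      have hpe : p (m e.1) = T := congrArg Subtype.val he.2
      rw [Set.mem_toFinset, ← hpe]
      exact hpmem (m e.1)
    · intro e _ e' _ h
      have h2 := congrArg m h
      rw [hmm, hmm] at h2
      exact Subtype.ext h2
    · intro v hv
      rw [Set.mem_toFinset] at hv
      have hpv : p v = T := part_eq hTP hv
      have hv2 : p v ∈ P2 := by rw [hpv]; exact hT2
      refine ⟨⟨m v, hcross2 v hv2⟩, ?_, hmm v⟩
      rw [Finset.mem_filter, hRdef]
      refine ⟨Finset.mem_univ _, Subtype.ext ?_⟩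
      show p (m (m v)) = T
      rw [hmm v, hpv]
  obtain ⟨c, hcL, hcR⟩ := konig_aux 5 L R hLfib hRfib
  obtain ⟨col, hcol_def⟩ : ∃ col : V → Fin 5,
      ∀ v, col v = if h : p v ∈ P1 then c ⟨v, h⟩ else c ⟨m v, hcross1' v h⟩ :=
    ⟨_, fun _ => rfl⟩
  have col_m : ∀ v, col (m v) = col v := by
    intro v
    by_cases h : p v ∈ P1
    · have h2 : p (m v) ∉ P1 := fun hh => hnotboth _ hh (hcross1 v h)
      rw [hcol_def, hcol_def, dif_neg h2, dif_pos h]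
      congr 1
      exact Subtype.ext (hmm v)
    · have h2 : p (m v) ∈ P1 := hcross1' v h
      rw [hcol_def, hcol_def, dif_pos h2, dif_neg h]
  have col_inj : ∀ S ∈ P, ∀ v ∈ S, ∀ w ∈ S, col v = col w → v = w := by
    intro S hS v hv w hw hcol
    have hpv : p v = S := part_eq hS hv
    have hpw : p w = S := part_eq hS hw
    rcases hor S hS with h1 | h2
    · have hv1 : p v ∈ P1 := by rw [hpv]; exact h1
      have hw1 : p w ∈ P1 := by rw [hpw]; exact h1
      rw [hcol_def, hcol_def, dif_pos hv1, dif_pos hw1] at hcol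
      have hLL : L ⟨v, hv1⟩ = L ⟨w, hw1⟩ := by
        rw [hLdef, hLdef]
        exact Subtype.ext (hpv.trans hpw.symm)
      have := hcL ⟨v, hv1⟩ ⟨w, hw1⟩ hLL hcol
      exact congrArg Subtype.val this
    · have hv1 : p v ∉ P1 := fun hh => hnotboth _ hh (by rw [← hpv] at h2; exact h2)
      have hw1 : p w ∉ P1 := fun hh => hnotboth _ hh (by rw [← hpw] at h2; exact h2)
      rw [hcol_def, hcol_def, dif_neg hv1, dif_neg hw1] at hcol
      have hRR : R ⟨m v, hcross1' v hv1⟩ = R ⟨m w, hcross1' w hw1⟩ := by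
        rw [hRdef, hRdef]
        refine Subtype.ext ?_
        show p (m (m v)) = p (m (m w))
        rw [hmm v, hmm w, hpv, hpw]
      have heq := hcR ⟨m v, hcross1' v hv1⟩ ⟨m w, hcross1' w hw1⟩ hRR hcol
      have heq2 : m v = m w := congrArg Subtype.val heq
      rw [← hmm v, ← hmm w, heq2]
  -- cycle structure of each part
  have hcycex : ∀ S : Set V, ∃ f : ZMod 5 → V, S ∈ P →
      Function.Injective f ∧ Set.range f = S ∧
      ∀ i : ZMod 5, G.Adj (f i) (f (i + 1)) := by
    intro S
    by_cases hS : S ∈ P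
    · obtain ⟨f, h1, h2, h3⟩ := cycle_structure G S (h5 S hS) ((hPparts S hS).2.1)
      exact ⟨f, fun _ => ⟨h1, h2, h3⟩⟩
    · exact ⟨fun _ => Classical.arbitrary V, fun h => absurd h hS⟩
  choose fS hfS using hcycex
  have hfinj : ∀ S, S ∈ P → Function.Injective (fS S) := fun S hS => (hfS S hS).1
  have hfrange : ∀ S, S ∈ P → Set.range (fS S) = S := fun S hS => (hfS S hS).2.1
  have hfadj : ∀ S, S ∈ P → ∀ i : ZMod 5, G.Adj (fS S i) (fS S (i + 1)) :=
    fun S hS => (hfS S hS).2.2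
  have hfmem : ∀ S, S ∈ P → ∀ j : ZMod 5, fS S j ∈ S := by
    intro S hS j
    have hmr : fS S j ∈ Set.range (fS S) := Set.mem_range_self j
    rwa [hfrange S hS] at hmr
  have hfp : ∀ S, S ∈ P → ∀ j : ZMod 5, p (fS S j) = S :=
    fun S hS j => part_eq hS (hfmem S hS j)
  have hNf : ∀ S, S ∈ P → ∀ i : ZMod 5,
      {u | u ∈ S ∧ G.Adj (fS S i) u} = {fS S (i - 1), fS S (i + 1)} := by
    intro S hS i
    have h1 : fS S (i + 1) ∈ {u | u ∈ S ∧ G.Adj (fS S i) u} := ⟨hfmem S hS _, hfadj S hS i⟩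
    have h2 : fS S (i - 1) ∈ {u | u ∈ S ∧ G.Adj (fS S i) u} := by
      refine ⟨hfmem S hS _, ?_⟩
      have h3 := hfadj S hS (i - 1)
      rw [show i - 1 + 1 = i from by ring] at h3
      exact h3.symm
    have hne : fS S (i - 1) ≠ fS S (i + 1) := by
      intro h
      exact (by decide : ∀ j : ZMod 5, j - 1 ≠ j + 1) i (hfinj S hS h)
    have hsub : ({fS S (i - 1), fS S (i + 1)} : Set V) ⊆ {u | u ∈ S ∧ G.Adj (fS S i) u} := by
      intro z hz
      rcases hz with rfl | rfl
      · exact h2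
      · exact h1
    refine (Set.eq_of_subset_of_ncard_le hsub ?_ (Set.toFinite _)).symm
    rw [(hPparts S hS).2.1 (fS S i) (hfmem S hS i), Set.ncard_pair hne]
  have hconsec : ∀ S, S ∈ P → ∀ i j : ZMod 5, G.Adj (fS S i) (fS S j) →
      i = j + 1 ∨ j = i + 1 := by
    intro S hS i j hadj
    have hmem : fS S j ∈ {u | u ∈ S ∧ G.Adj (fS S i) u} := ⟨hfmem S hS j, hadj⟩
    rw [hNf S hS i] at hmem
    rcases hmem with h | h
    · left
      have h1 := hfinj S hS h
      rw [h1]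
      ring
    · right
      exact hfinj S hS h
  have hidxex : ∀ v : V, ∃ i : ZMod 5, fS (p v) i = v := by
    intro v
    have hv : v ∈ Set.range (fS (p v)) := by
      rw [hfrange (p v) (hpP v)]
      exact hpmem v
    exact hv
  choose idx hidx using hidxex
  have hkex : ∀ (S : Set V) (i : Fin 5), ∃ k : ZMod 5, S ∈ P → col (fS S k) = i := by
    intro S i
    by_cases hS : S ∈ P
    · have hinj : Function.Injective (fun k : ZMod 5 => col (fS S k)) := by
        intro a b hab
        exact hfinj S hS (col_inj S hS _ (hfmem S hS a) _ (hfmem S hS b) hab)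
      have hbij : Function.Bijective (fun k : ZMod 5 => col (fS S k)) :=
        (Fintype.bijective_iff_injective_and_card _).mpr
          ⟨hinj, by rw [ZMod.card, Fintype.card_fin]⟩
      obtain ⟨k, hk⟩ := hbij.2 i
      exact ⟨k, fun _ => hk⟩
    · exact ⟨0, fun h => absurd h hS⟩
  choose kS hkS' using hkex
  have hkS : ∀ S, S ∈ P → ∀ i : Fin 5, col (fS S (kS S i)) = i := fun S hS i => hkS' S i hS
  have hkuniq : ∀ S, S ∈ P → ∀ i : Fin 5, ∀ j : ZMod 5, col (fS S j) = i → j = kS S i := by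
    intro S hS i j hj
    apply hfinj S hS
    apply col_inj S hS _ (hfmem S hS j) _ (hfmem S hS (kS S i))
    rw [hj, hkS S hS i]
  -- the six matchings
  obtain ⟨MPart, hMPart_def⟩ : ∃ MP : Fin 5 → Set (Sym2 V),
      ∀ i, MP i = {e | ∃ v, col v = i ∧ e = s(v, m v)} := ⟨_, fun _ => rfl⟩
  obtain ⟨CPart, hCPart_def⟩ : ∃ CP : Fin 5 → Set (Sym2 V),
      ∀ i, CP i = {e | ∃ S, S ∈ P ∧ (e = s(fS S (kS S i + 1), fS S (kS S i + 2)) ∨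
        e = s(fS S (kS S i + 3), fS S (kS S i + 4)))} := ⟨_, fun _ => rfl⟩
  obtain ⟨F, hF_lt, hF_last⟩ : ∃ F : Fin 6 → Set (Sym2 V),
      (∀ (j : Fin 6) (h : (j : ℕ) < 5), F j = MPart ⟨j, h⟩ ∪ CPart ⟨j, h⟩) ∧
      (∀ j : Fin 6, ¬ (j : ℕ) < 5 → F j = complementaryMatching G P) := by
    refine ⟨fun j => if h : (j : ℕ) < 5 then MPart ⟨j, h⟩ ∪ CPart ⟨j, h⟩
      else complementaryMatching G P, fun j h => dif_pos h, fun j h => dif_neg h⟩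
  -- membership helpers
  have hMP_mem : ∀ (i : Fin 5) (e : Sym2 V) (x : V), e ∈ MPart i → x ∈ e →
      e = s(x, m x) ∧ col x = i := by
    intro i e x he hx
    rw [hMPart_def] at he
    obtain ⟨v, hv, rfl⟩ := he
    rcases Sym2.mem_iff.mp hx with rfl | rfl
    · exact ⟨rfl, hv⟩
    · constructor
      · rw [hmm v]
        exact Sym2.eq_swap
      · rw [col_m v]
        exact hv
  have hCP_endpoints : ∀ (i : Fin 5) (e : Sym2 V), e ∈ CPart i →
      ∃ S, S ∈ P ∧ ∀ x ∈ e, x ∈ S := by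
    intro i e he
    rw [hCPart_def] at he
    obtain ⟨S, hS, h | h⟩ := he
    · refine ⟨S, hS, ?_⟩
      subst h
      intro x hx
      rcases Sym2.mem_iff.mp hx with rfl | rfl <;> exact hfmem S hS _
    · refine ⟨S, hS, ?_⟩
      subst h
      intro x hx
      rcases Sym2.mem_iff.mp hx with rfl | rfl <;> exact hfmem S hS _
  have hCP_mem : ∀ (i : Fin 5) (e : Sym2 V) (x : V), e ∈ CPart i → x ∈ e →
      ∃ S, S ∈ P ∧ ∃ d : ZMod 5, (d = 1 ∨ d = 2 ∨ d = 3 ∨ d = 4) ∧ x = fS S (kS S i + d) := by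
    intro i e x he hx
    rw [hCPart_def] at he
    obtain ⟨S, hS, h | h⟩ := he
    · subst h
      rcases Sym2.mem_iff.mp hx with rfl | rfl
      · exact ⟨S, hS, 1, Or.inl rfl, rfl⟩
      · exact ⟨S, hS, 2, Or.inr (Or.inl rfl), rfl⟩
    · subst h
      rcases Sym2.mem_iff.mp hx with rfl | rfl
      · exact ⟨S, hS, 3, Or.inr (Or.inr (Or.inl rfl)), rfl⟩
      · exact ⟨S, hS, 4, Or.inr (Or.inr (Or.inr rfl)), rfl⟩
  have hCP_col : ∀ (i : Fin 5) (e : Sym2 V) (x : V), e ∈ CPart i → x ∈ e → col x ≠ i := by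
    intro i e x he hx hcolx
    obtain ⟨S, hS, d, hd, rfl⟩ := hCP_mem i e x he hx
    have hk := hkuniq S hS i _ hcolx
    have hd0 : d = 0 := add_eq_left.mp hk
    rcases hd with rfl | rfl | rfl | rfl <;> exact absurd hd0 (by decide)
  -- covering
  have hcoverF5 : ∀ (i : Fin 5) (v : V), ∃ e ∈ MPart i ∪ CPart i, v ∈ e := by
    intro i v
    by_cases hc : col v = i
    · exact ⟨s(v, m v), Or.inl (by rw [hMPart_def]; exact ⟨v, hc, rfl⟩),
        Sym2.mem_mk_left v (m v)⟩
    · have hne : idx v ≠ kS (p v) i := by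
        intro h
        apply hc
        rw [← hidx v, h]
        exact hkS (p v) (hpP v) i
      have hd0 : idx v - kS (p v) i ≠ 0 := fun h => hne (by rwa [sub_eq_zero] at h)
      rcases (by decide : ∀ d : ZMod 5, d ≠ 0 → d = 1 ∨ d = 2 ∨ d = 3 ∨ d = 4) _ hd0 with
        h1 | h1 | h1 | h1
      · refine ⟨s(fS (p v) (kS (p v) i + 1), fS (p v) (kS (p v) i + 2)),
          Or.inr (by rw [hCPart_def]; exact ⟨p v, hpP v, Or.inl rfl⟩), ?_⟩
        have hv' : fS (p v) (kS (p v) i + 1) = v := by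
          rw [← h1, show kS (p v) i + (idx v - kS (p v) i) = idx v from by ring, hidx v]
        rw [hv']
        exact Sym2.mem_mk_left _ _
      · refine ⟨s(fS (p v) (kS (p v) i + 1), fS (p v) (kS (p v) i + 2)),
          Or.inr (by rw [hCPart_def]; exact ⟨p v, hpP v, Or.inl rfl⟩), ?_⟩
        have hv' : fS (p v) (kS (p v) i + 2) = v := by
          rw [← h1, show kS (p v) i + (idx v - kS (p v) i) = idx v from by ring, hidx v]
        rw [hv']
        exact Sym2.mem_mk_right _ _
      · refine ⟨s(fS (p v) (kS (p v) i + 3), fS (p v) (kS (p v) i + 4)),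
          Or.inr (by rw [hCPart_def]; exact ⟨p v, hpP v, Or.inr rfl⟩), ?_⟩
        have hv' : fS (p v) (kS (p v) i + 3) = v := by
          rw [← h1, show kS (p v) i + (idx v - kS (p v) i) = idx v from by ring, hidx v]
        rw [hv']
        exact Sym2.mem_mk_left _ _
      · refine ⟨s(fS (p v) (kS (p v) i + 3), fS (p v) (kS (p v) i + 4)),
          Or.inr (by rw [hCPart_def]; exact ⟨p v, hpP v, Or.inr rfl⟩), ?_⟩
        have hv' : fS (p v) (kS (p v) i + 4) = v := by
          rw [← h1, show kS (p v) i + (idx v - kS (p v) i) = idx v from by ring, hidx v]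
        rw [hv']
        exact Sym2.mem_mk_right _ _
  -- pairwise disjointness
  have hdisjF5 : ∀ i : Fin 5, (MPart i ∪ CPart i).Pairwise Sym2Disjoint := by
    intro i e he e' he' hne x hx hx'
    apply hne
    rcases he with heM | heC
    · rcases he' with heM' | heC'
      · rw [(hMP_mem i e x heM hx).1, (hMP_mem i e' x heM' hx').1]
      · exact absurd (hMP_mem i e x heM hx).2 (hCP_col i e' x heC' hx')
    · rcases he' with heM' | heC'
      · exact absurd (hMP_mem i e' x heM' hx').2 (hCP_col i e x heC hx)
      · rw [hCPart_def] at heC heC'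
        obtain ⟨T, hT, hE⟩ := heC
        obtain ⟨T', hT', hE'⟩ := heC'
        have hx1 : x ∈ T := by
          rcases hE with rfl | rfl <;> rcases Sym2.mem_iff.mp hx with rfl | rfl <;>
            exact hfmem T hT _
        have hx2 : x ∈ T' := by
          rcases hE' with rfl | rfl <;> rcases Sym2.mem_iff.mp hx' with rfl | rfl <;>
            exact hfmem T' hT' _
        have hTT : T' = T := by
          by_contra hss
          exact Set.disjoint_left.mp (hPdisj hT' hT hss) hx2 hx1
        subst hTT
        rcases hE with rfl | rfl <;> rcases hE' with rfl | rfl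
        · rfl
        · exfalso
          rcases Sym2.mem_iff.mp hx with h1 | h1 <;>
            rcases Sym2.mem_iff.mp hx' with h2 | h2 <;>
            exact absurd (add_left_cancel (hfinj T' hT' (h1.symm.trans h2))) (by decide)
        · exfalso
          rcases Sym2.mem_iff.mp hx with h1 | h1 <;>
            rcases Sym2.mem_iff.mp hx' with h2 | h2 <;>
            exact absurd (add_left_cancel (hfinj T' hT' (h1.symm.trans h2))) (by decide)
        · rfl
  -- every F j is a perfect matching
  have hpmF : ∀ j : Fin 6, IsPerfectMatchingSet G (F j) := by
    intro j
    by_cases h : (j : ℕ) < 5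
    · rw [hF_lt j h]
      refine ⟨⟨?_, hdisjF5 ⟨j, h⟩⟩, hcoverF5 ⟨j, h⟩⟩
      rintro e (heM | heC)
      · rw [hMPart_def] at heM
        obtain ⟨v, -, rfl⟩ := heM
        exact (G.mem_edgeSet).mpr (hmadj v)
      · rw [hCPart_def] at heC
        obtain ⟨S, hS, rfl | rfl⟩ := heC
        · have h3 := hfadj S hS (kS S ⟨j, h⟩ + 1)
          rw [SimpleGraph.mem_edgeSet,
            show kS S ⟨j, h⟩ + 2 = kS S ⟨j, h⟩ + 1 + 1 from by ring]
          exact h3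
        · have h3 := hfadj S hS (kS S ⟨j, h⟩ + 3)
          rw [SimpleGraph.mem_edgeSet,
            show kS S ⟨j, h⟩ + 4 = kS S ⟨j, h⟩ + 3 + 1 from by ring]
          exact h3
    · rw [hF_last j h]
      refine ⟨⟨fun e he => he.1, ?_⟩, fun v => ⟨s(v, m v), hm_cm v, Sym2.mem_mk_left v (m v)⟩⟩
      intro e he e' he' hne x hx hx'
      exact hne ((hcm_rep e he x hx).trans (hcm_rep e' he' x hx').symm)
  -- the key counting fact for cycle edges
  have hkey : ∀ S, S ∈ P → ∀ i : ZMod 5,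
      ({j : Fin 6 | s(fS S i, fS S (i + 1)) ∈ F j} : Set (Fin 6)).ncard = 2 := by
    intro S hS i
    have hmemS : ∀ x ∈ s(fS S i, fS S (i + 1)), x ∈ S := by
      intro x hx
      rcases Sym2.mem_iff.mp hx with rfl | rfl <;> exact hfmem S hS _
    have hset : {j : Fin 6 | s(fS S i, fS S (i + 1)) ∈ F j}
        = {(col (fS S (i - 1))).castSucc, (col (fS S (i + 2))).castSucc} := by
      ext j
      simp only [Set.mem_setOf_eq, Set.mem_insert_iff, Set.mem_singleton_iff]
      by_cases hlt : (j : ℕ) < 5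
      · rw [hF_lt j hlt]
        constructor
        · rintro (heM | heC)
          · exfalso
            have h1 := hMP_mem ⟨j, hlt⟩ _ _ heM (Sym2.mem_mk_left (fS S i) (fS S (i + 1)))
            have hmx : m (fS S i) ∈ s(fS S i, fS S (i + 1)) := by
              rw [h1.1]
              exact Sym2.mem_mk_right _ _
            rcases Sym2.mem_iff.mp hmx with h2 | h2
            · exact hmne (fS S i) h2
            · apply hmout (fS S i)
              rw [hfp S hS i, h2]
              exact hfmem S hS _
          · rw [hCPart_def] at heC
            obtain ⟨T, hT, hE⟩ := heC
            have hend : ∀ x ∈ s(fS S i, fS S (i + 1)), x ∈ T := by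
              intro x hx
              rcases hE with h' | h' <;> rw [h'] at hx <;>
                rcases Sym2.mem_iff.mp hx with rfl | rfl <;> exact hfmem T hT _
            have hTS : T = S := by
              by_contra hss
              exact Set.disjoint_left.mp (hPdisj hT hS hss)
                (hend _ (Sym2.mem_mk_left _ _)) (hmemS _ (Sym2.mem_mk_left _ _))
            subst hTS
            rcases hE with h' | h'
            · rcases Sym2.eq_iff.mp h' with ⟨ha, hb⟩ | ⟨ha, hb⟩
              · left
                have h1 := hfinj T hT ha
                have hk : kS T ⟨j, hlt⟩ = i - 1 := by rw [h1]; ring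
                have hcolk := hkS T hT ⟨j, hlt⟩
                rw [hk] at hcolk
                apply Fin.ext
                rw [Fin.coe_castSucc, hcolk]
              · exfalso
                have h1 := hfinj T hT ha
                have h2 := hfinj T hT hb
                rw [h1] at h2
                have h3 : kS T ⟨j, hlt⟩ + 3 = kS T ⟨j, hlt⟩ + 1 := by rw [← h2]; ring
                exact absurd (add_left_cancel h3) (by decide)
            · rcases Sym2.eq_iff.mp h' with ⟨ha, hb⟩ | ⟨ha, hb⟩
              · right
                have h1 := hfinj T hT ha
                have hk : kS T ⟨j, hlt⟩ = i + 2 := by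
                  have h4 : kS T ⟨j, hlt⟩ = i - 3 := by rw [h1]; ring
                  rw [h4]
                  exact (by decide : ∀ z : ZMod 5, z - 3 = z + 2) i
                have hcolk := hkS T hT ⟨j, hlt⟩
                rw [hk] at hcolk
                apply Fin.ext
                rw [Fin.coe_castSucc, hcolk]
              · exfalso
                have h1 := hfinj T hT ha
                have h2 := hfinj T hT hb
                rw [h1] at h2
                have h3 : kS T ⟨j, hlt⟩ + 5 = kS T ⟨j, hlt⟩ + 3 := by rw [← h2]; ring
                exact absurd (add_left_cancel h3) (by decide)
        · rintro (hj | hj)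
          · right
            rw [hCPart_def]
            refine ⟨S, hS, Or.inl ?_⟩
            have hcol : col (fS S (i - 1)) = ⟨(j : ℕ), hlt⟩ :=
              Fin.ext (congrArg Fin.val hj).symm
            have hk : kS S ⟨(j : ℕ), hlt⟩ = i - 1 := (hkuniq S hS ⟨(j : ℕ), hlt⟩ (i - 1) hcol).symm
            rw [hk, show i - 1 + 1 = i from by ring, show i - 1 + 2 = i + 1 from by ring]
          · right
            rw [hCPart_def]
            refine ⟨S, hS, Or.inr ?_⟩
            have hcol : col (fS S (i + 2)) = ⟨(j : ℕ), hlt⟩ :=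
              Fin.ext (congrArg Fin.val hj).symm
            have hk : kS S ⟨(j : ℕ), hlt⟩ = i + 2 := (hkuniq S hS ⟨(j : ℕ), hlt⟩ (i + 2) hcol).symm
            rw [hk, show i + 2 + 3 = i from (by decide : ∀ z : ZMod 5, z + 2 + 3 = z) i,
              show i + 2 + 4 = i + 1 from (by decide : ∀ z : ZMod 5, z + 2 + 4 = z + 1) i]
      · rw [hF_last j hlt]
        constructor
        · intro he
          exact absurd ⟨S, hS, hmemS⟩ he.2
        · rintro (hj | hj) <;>
            exact absurd (by rw [hj, Fin.coe_castSucc]; exact (col _).isLt) hlt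
    rw [hset]
    apply Set.ncard_pair
    intro hcc
    have hc2 := Fin.castSucc_injective _ hcc
    have hc3 := hfinj S hS (col_inj S hS _ (hfmem S hS (i - 1)) _ (hfmem S hS (i + 2)) hc2)
    exact (by decide : ∀ z : ZMod 5, z - 1 ≠ z + 2) i hc3
  -- counting for all edges
  have hcount : ∀ u w : V, G.Adj u w →
      ({j : Fin 6 | s(u, w) ∈ F j} : Set (Fin 6)).ncard = 2 := by
    intro u w hadj
    by_cases hcyc : w ∈ p u
    · have hpu : p u ∈ P := hpP u
      obtain ⟨j0, hj0⟩ : ∃ j, fS (p u) j = w := by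
        have hw : w ∈ Set.range (fS (p u)) := by
          rw [hfrange (p u) hpu]
          exact hcyc
        exact hw
      have hadj' : G.Adj (fS (p u) (idx u)) (fS (p u) j0) := by
        rw [hidx u, hj0]
        exact hadj
      rcases hconsec (p u) hpu (idx u) j0 hadj' with h | h
      · have heq : s(u, w) = s(fS (p u) j0, fS (p u) (j0 + 1)) := by
          conv_lhs => rw [← hidx u, ← hj0, h]
          exact Sym2.eq_swap
        rw [heq]
        exact hkey (p u) hpu j0
      · have heq : s(u, w) = s(fS (p u) (idx u), fS (p u) (idx u + 1)) := by
          conv_lhs => rw [← hidx u, ← hj0, h]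
        rw [heq]
        exact hkey (p u) hpu (idx u)
    · have hw : w = m u := hmuniq u w hadj hcyc
      subst hw
      have hset : {j : Fin 6 | s(u, m u) ∈ F j} = {(col u).castSucc, (5 : Fin 6)} := by
        ext j
        simp only [Set.mem_setOf_eq, Set.mem_insert_iff, Set.mem_singleton_iff]
        by_cases hlt : (j : ℕ) < 5
        · rw [hF_lt j hlt]
          constructor
          · rintro (heM | heC)
            · left
              have hcu := (hMP_mem ⟨j, hlt⟩ _ _ heM (Sym2.mem_mk_left u (m u))).2
              apply Fin.ext
              rw [Fin.coe_castSucc]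
              exact (congrArg Fin.val hcu).symm
            · exfalso
              obtain ⟨S, hS, hend⟩ := hCP_endpoints ⟨j, hlt⟩ _ heC
              have h1 : u ∈ S := hend u (Sym2.mem_mk_left _ _)
              have h2 : m u ∈ S := hend (m u) (Sym2.mem_mk_right _ _)
              apply hmout u
              rw [part_eq hS h1]
              exact h2
          · rintro (hj | hj)
            · left
              rw [hMPart_def]
              refine ⟨u, ?_, rfl⟩
              exact Fin.ext (congrArg Fin.val hj).symm
            · exfalso
              rw [hj] at hlt
              exact absurd hlt (by decide)
        · rw [hF_last j hlt]
          constructor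
          · intro _
            right
            have h6 := j.isLt
            have hj5 : (j : ℕ) = 5 := by omega
            exact Fin.ext (hj5.trans rfl)
          · intro _
            exact hm_cm u
      rw [hset]
      apply Set.ncard_pair
      intro hcc
      have h1 := congrArg Fin.val hcc
      rw [Fin.coe_castSucc] at h1
      have h4 : ((col u) : ℕ) = 5 := h1.trans rfl
      have h2 := (col u).isLt
      omega
  refine ⟨F, hpmF, ?_⟩
  have hfinal : ∀ e : Sym2 V, e ∈ G.edgeSet →
      ({j : Fin 6 | e ∈ F j} : Set (Fin 6)).ncard = 2 := by
    intro e
    induction e using Sym2.ind with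
    | _ u w => exact fun he => hcount u w ((G.mem_edgeSet).mp he)
  exact hfinal
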